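/- Let λ and μ be partitions of a positive integer n. If λ ≥_c μ in the consumption ordering (i.e., every subgroup of S_n that consumes λ also consumes μ), then λ ≥ μ in the dominance ordering: for every k, the sum of the k largest parts of λ is at least the sum of the k largest parts of μ. -/

import Mathlib

/-- A subgroup `H` of `S_n` consumes a partition `λ ⊢ n` if there is a set partition of
`{1,…,n}` whose multiset of block sizes is `λ` and such that the only element of `H`
mapping each block to itself is the identity. -/
def Consumes (n : ℕ) (H : Subgroup (Equiv.Perm (Fin n))) (lam : Nat.Partition n) : Prop :=
  ∃ P : Finset (Finset (Fin n)),
    (∀ i : Fin n, ∃! B : Finset (Fin n), B ∈ P ∧ i ∈ B) ∧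
    P.val.map Finset.card = lam.parts ∧
    ∀ σ ∈ H, (∀ B ∈ P, ∀ i ∈ B, σ i ∈ B) → σ = 1

namespace CLD

variable (l : List ℕ)

def s (i : ℕ) : ℕ := (l.take i).sum

def r (x : ℕ) : ℕ := Nat.findGreatest (fun i => s l i ≤ x) l.length

def c (x : ℕ) : ℕ := x - s l (r l x)

lemma s_zero : s l 0 = 0 := rfl

lemma s_mono {i j : ℕ} (hij : i ≤ j) : s l i ≤ s l j := by
  have : l.take i = (l.take j).take i := by rw [List.take_take, Nat.min_eq_left hij]
  rw [s, this]
  conv_rhs => rw [s, ← List.take_append_drop i (l.take j)]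
  rw [List.sum_append]
  exact Nat.le_add_right _ _

lemma s_le_sum (i : ℕ) : s l i ≤ l.sum := by
  conv_rhs => rw [← List.take_append_drop i l]
  rw [List.sum_append]; exact Nat.le_add_right _ _

lemma s_succ {i : ℕ} (hi : i < l.length) : s l (i + 1) = s l i + l.get ⟨i, hi⟩ :=
  List.sum_take_succ l i hi

lemma s_length : s l l.length = l.sum := by rw [s, List.take_length]

lemma r_le_length (x : ℕ) : r l x ≤ l.length := Nat.findGreatest_le _

lemma s_r_le {x : ℕ} : s l (r l x) ≤ x := by
  rcases Nat.eq_zero_or_pos (r l x) with h | h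
  · rw [h]; exact Nat.zero_le x
  · exact Nat.findGreatest_of_ne_zero (m := r l x) rfl (by omega)

lemma r_lt_length {x : ℕ} (hx : x < l.sum) : r l x < l.length := by
  rcases Nat.lt_or_ge (r l x) l.length with h | h
  · exact h
  · exfalso
    have h1 : r l x = l.length := le_antisymm (r_le_length l x) h
    have := s_r_le l (x := x)
    rw [h1, s_length] at this
    omega

lemma lt_s_r_succ {x : ℕ} (hx : x < l.sum) : x < s l (r l x + 1) := by
  by_contra hcon
  push_neg at hcon
  exact Nat.findGreatest_is_greatest (P := fun i => s l i ≤ x) (Nat.lt_succ_self _)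
    (r_lt_length l hx) hcon

lemma r_eq {x i : ℕ} (hi : i < l.length) (h1 : s l i ≤ x) (h2 : x < s l (i + 1)) :
    r l x = i := by
  have hle : i ≤ r l x := Nat.le_findGreatest (le_of_lt hi) h1
  have hge : r l x ≤ i := by
    by_contra hcon
    push_neg at hcon
    have := s_r_le l (x := x)
    have hmono := s_mono l (show i + 1 ≤ r l x by omega)
    omega
  omega

lemma s_add_c {x : ℕ} : s l (r l x) + c l x = x := by
  have := s_r_le l (x := x); unfold c; omega

lemma c_lt {x : ℕ} (hx : x < l.sum) : c l x < l.get ⟨r l x, r_lt_length l hx⟩ := by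
  have h1 := lt_s_r_succ l hx
  have h2 := s_succ l (r_lt_length l hx)
  have h3 := s_r_le l (x := x)
  unfold c; omega

lemma rc_inj {x y : ℕ} (hr : r l x = r l y) (hc : c l x = c l y) : x = y := by
  have hx := s_add_c l (x := x)
  have hy := s_add_c l (x := y)
  rw [hr, hc] at hx
  omega

variable (n : ℕ)

/-- The row blocks. -/
def R (i : ℕ) : Finset (Fin n) := Finset.univ.filter (fun x => r l x.val = i)

lemma mem_R {i : ℕ} {x : Fin n} : x ∈ R l n i ↔ r l x.val = i := by
  simp [R]

/-- The column subgroup: permutations preserving the column index. -/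
def H : Subgroup (Equiv.Perm (Fin n)) where
  carrier := {σ | ∀ x : Fin n, c l ((σ : Equiv.Perm (Fin n)) x).val = c l x.val}
  one_mem' := fun _ => rfl
  mul_mem' := @fun a b ha hb x => by
    rw [Equiv.Perm.mul_apply, ha, hb]
  inv_mem' := @fun σ hσ x => by
    rw [← hσ (σ⁻¹ x), Equiv.Perm.inv_def, Equiv.apply_symm_apply]

lemma mem_H {σ : Equiv.Perm (Fin n)} :
    σ ∈ H l n ↔ ∀ x : Fin n, c l (σ x).val = c l x.val := Iff.rfl

variable {n}

lemma card_R (hsum : l.sum = n) (i : Fin l.length) : (R l n i.val).card = l.get i := by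
  have hlt : s l (i.val + 1) ≤ n := hsum ▸ s_le_sum l _
  have hR : R l n i.val = (Finset.Ico (s l i.val) (s l (i.val + 1))).attachFin
      (fun m hm => lt_of_lt_of_le (Finset.mem_Ico.mp hm).2 hlt) := by
    ext x
    rw [mem_R, Finset.mem_attachFin, Finset.mem_Ico]
    constructor
    · intro hrx
      rw [← hrx]
      exact ⟨s_r_le l, lt_s_r_succ l (hsum ▸ x.isLt)⟩
    · rintro ⟨h1, h2⟩
      exact r_eq l i.isLt h1 h2
  rw [hR, Finset.card_attachFin, Nat.card_Ico, s_succ l i.isLt]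
  simp only [Fin.eta]
  omega

lemma R_nonempty (hpos : ∀ a ∈ l, 0 < a) (hsum : l.sum = n) (i : Fin l.length) :
    (R l n i.val).Nonempty := by
  rw [← Finset.card_pos, card_R l hsum]
  exact hpos _ (List.get_mem l i)

lemma R_injective (hpos : ∀ a ∈ l, 0 < a) (hsum : l.sum = n) :
    Function.Injective (fun i : Fin l.length => R l n i.val) := by
  intro i j hij
  have hij' : R l n i.val = R l n j.val := hij
  obtain ⟨x, hx⟩ := R_nonempty l hpos hsum i
  have hx' : x ∈ R l n j.val := hij' ▸ hx
  rw [mem_R] at hx hx'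
  exact Fin.ext (hx ▸ hx')

/-- The row set partition. -/
def P (hpos : ∀ a ∈ l, 0 < a) (hsum : l.sum = n) : Finset (Finset (Fin n)) :=
  ⟨Multiset.map (fun i : Fin l.length => R l n i.val) Finset.univ.val,
    Multiset.Nodup.map (R_injective l hpos hsum) Finset.univ.nodup⟩

lemma mem_P {hpos : ∀ a ∈ l, 0 < a} {hsum : l.sum = n} {B : Finset (Fin n)} :
    B ∈ P l hpos hsum ↔ ∃ i : Fin l.length, R l n i.val = B := by
  unfold P
  rw [Finset.mem_mk, Multiset.mem_map]
  constructor
  · rintro ⟨i, _, hi⟩; exact ⟨i, hi⟩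
  · rintro ⟨i, hi⟩; exact ⟨i, Finset.mem_val.mpr (Finset.mem_univ i), hi⟩

lemma P_partition (hpos : ∀ a ∈ l, 0 < a) (hsum : l.sum = n) (x : Fin n) :
    ∃! B : Finset (Fin n), B ∈ P l hpos hsum ∧ x ∈ B := by
  have hxlt : (x : ℕ) < l.sum := hsum ▸ x.isLt
  refine ⟨R l n (r l x.val), ⟨?_, ?_⟩, ?_⟩
  · exact (mem_P l).mpr ⟨⟨r l x.val, r_lt_length l hxlt⟩, rfl⟩
  · exact (mem_R l n).mpr rfl
  · rintro B ⟨hB, hxB⟩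
    obtain ⟨i, rfl⟩ := (mem_P l).mp hB
    rw [mem_R] at hxB
    rw [hxB]

lemma P_cards (hpos : ∀ a ∈ l, 0 < a) (hsum : l.sum = n) :
    (P l hpos hsum).val.map Finset.card = (l : Multiset ℕ) := by
  show (Multiset.map (fun i : Fin l.length => R l n i.val) Finset.univ.val).map
      Finset.card = (l : Multiset ℕ)
  rw [Multiset.map_map]
  have : (Finset.univ : Finset (Fin l.length)).val = ↑(List.finRange l.length) := by
    rw [Fin.univ_def]
  rw [this]
  rw [show ((Finset.card ∘ fun i : Fin l.length => R l n i.val)) = fun i => l.get i from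
    funext fun i => card_R l hsum i]
  rw [Multiset.map_coe, List.map_get_finRange]

lemma P_distinguishes (hpos : ∀ a ∈ l, 0 < a) (hsum : l.sum = n)
    (σ : Equiv.Perm (Fin n)) (hσ : σ ∈ H l n)
    (hstab : ∀ B ∈ P l hpos hsum, ∀ x ∈ B, σ x ∈ B) : σ = 1 := by
  ext x
  have hxlt : (x : ℕ) < l.sum := hsum ▸ x.isLt
  have hBP : R l n (r l x.val) ∈ P l hpos hsum :=
    (mem_P l).mpr ⟨⟨r l x.val, r_lt_length l hxlt⟩, rfl⟩
  have hmem : σ x ∈ R l n (r l x.val) := hstab _ hBP x ((mem_R l n).mpr rfl)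
  rw [mem_R] at hmem
  have hc : c l ((σ x) : ℕ) = c l (x : ℕ) := (mem_H l n).mp hσ x
  have : ((σ x : Fin n) : ℕ) = (x : ℕ) := rc_inj l hmem hc
  simpa [Fin.ext_iff] using this

end CLD

namespace CLD2

lemma pullback {α β : Type*} [DecidableEq α] [DecidableEq β] (f : α → β) :
    ∀ (u : Multiset β) (t : Multiset α), u ≤ t.map f → ∃ v, v ≤ t ∧ v.map f = u := by
  intro u
  induction u using Multiset.induction_on with
  | empty => intro t _; exact ⟨0, Multiset.zero_le _, rfl⟩
  | cons b u ih =>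
    intro t hle
    have hb : b ∈ t.map f := Multiset.mem_of_le hle (Multiset.mem_cons_self b u)
    obtain ⟨a, ha, rfl⟩ := Multiset.mem_map.mp hb
    have hta : t = a ::ₘ t.erase a := (Multiset.cons_erase ha).symm
    have h2 : u ≤ (t.erase a).map f := by
      have h3 : (f a ::ₘ u).erase (f a) ≤ (t.map f).erase (f a) :=
        Multiset.erase_le_erase (f a) hle
      rw [Multiset.erase_cons_head] at h3
      have h4 : t.map f = f a ::ₘ (t.erase a).map f := by
        conv_lhs => rw [hta]
        rw [Multiset.map_cons]
      rwa [h4, Multiset.erase_cons_head] at h3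
    obtain ⟨v, hv, rfl⟩ := ih (t.erase a) h2
    refine ⟨a ::ₘ v, ?_, by rw [Multiset.map_cons]⟩
    rw [hta]
    exact Multiset.cons_le_cons a hv

lemma downclosed_eq_range {D : Finset ℕ} (hD : ∀ i ∈ D, ∀ i', i' ≤ i → i' ∈ D) :
    D = Finset.range D.card := by
  ext i
  rw [Finset.mem_range]
  constructor
  · intro hi
    have hsub : Finset.range (i + 1) ⊆ D := fun j hj =>
      hD i hi j (by simpa [Nat.lt_succ_iff] using Finset.mem_range.mp hj)
    have := Finset.card_le_card hsub
    rw [Finset.card_range] at this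
    omega
  · intro hi
    by_contra hcon
    have hsub : D ⊆ Finset.range i := by
      intro j hj
      rw [Finset.mem_range]
      by_contra hj2
      exact hcon (hD j hj i (by omega))
    have := Finset.card_le_card hsub
    rw [Finset.card_range] at this
    omega

lemma card_le_inter_range {S D : Finset ℕ} {k : ℕ} (hS : S ⊆ D)
    (hD : ∀ i ∈ D, ∀ i', i' ≤ i → i' ∈ D) (hSk : S.card ≤ k) :
    S.card ≤ (D ∩ Finset.range k).card := by
  have h1 : D = Finset.range D.card := downclosed_eq_range hD
  have h2 : D ∩ Finset.range k = Finset.range (min D.card k) := by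
    conv_lhs => rw [h1]
    ext j
    simp only [Finset.mem_inter, Finset.mem_range, lt_min_iff]
  rw [h2, Finset.card_range]
  exact le_min (Finset.card_le_card hS) hSk

lemma sum_getD (l : List ℕ) (k : ℕ) :
    ∑ i ∈ Finset.range k, l.getD i 0 = (l.take k).sum := by
  induction l generalizing k with
  | nil => simp
  | cons a t ih =>
    cases k with
    | zero => simp
    | succ k =>
      rw [Finset.sum_range_succ' (fun i => (a :: t).getD i 0) k]
      simp only [List.getD_cons_succ, List.getD_cons_zero, List.take_succ_cons,
        List.sum_cons, ih]
      omega

end CLD2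

namespace CLD

variable {l : List ℕ} {n : ℕ}

lemma c_le (x : ℕ) : c l x ≤ x := by unfold c; omega

lemma key (hsort : l.Pairwise (· ≥ ·)) (hsum : l.sum = n)
    (Q : Finset (Finset (Fin n)))
    (hQ1 : ∀ x : Fin n, ∃! B : Finset (Fin n), B ∈ Q ∧ x ∈ B)
    (hQd : ∀ σ ∈ H l n, (∀ B ∈ Q, ∀ x ∈ B, σ x ∈ B) → σ = 1)
    (T : Finset (Finset (Fin n))) (hTQ : T ⊆ Q) (k : ℕ) (hTk : T.card ≤ k) :
    ∑ B ∈ T, B.card ≤ (l.take k).sum := by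
  classical
  choose blk hblk using hQ1
  -- injectivity of the column index within each block of Q
  have hcinj : ∀ B ∈ Q, ∀ x ∈ B, ∀ y ∈ B, c l x.val = c l y.val → x = y := by
    intro B hB x hx y hy hcxy
    by_contra hne
    have hσH : Equiv.swap x y ∈ H l n := by
      rw [mem_H]
      intro z
      rcases eq_or_ne z x with rfl | hzx
      · rw [Equiv.swap_apply_left]; exact hcxy.symm
      rcases eq_or_ne z y with rfl | hzy
      · rw [Equiv.swap_apply_right]; exact hcxy
      · rw [Equiv.swap_apply_of_ne_of_ne hzx hzy]
    have hstab : ∀ B' ∈ Q, ∀ z ∈ B', Equiv.swap x y z ∈ B' := by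
      intro B' hB' z hz
      rcases eq_or_ne z x with rfl | hzx
      · rw [Equiv.swap_apply_left]
        have hBB : B' = B := ((hblk z).2 B' ⟨hB', hz⟩).trans ((hblk z).2 B ⟨hB, hx⟩).symm
        exact hBB ▸ hy
      rcases eq_or_ne z y with rfl | hzy
      · rw [Equiv.swap_apply_right]
        have hBB : B' = B := ((hblk z).2 B' ⟨hB', hz⟩).trans ((hblk z).2 B ⟨hB, hy⟩).symm
        exact hBB ▸ hx
      · rw [Equiv.swap_apply_of_ne_of_ne hzx hzy]; exact hz
    have hone := hQd _ hσH hstab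
    have h1 : Equiv.swap x y x = x := by rw [hone]; rfl
    rw [Equiv.swap_apply_left] at h1
    exact hne h1.symm
  set U : Finset (Fin n) := T.biUnion id with hU
  have hUcard : U.card = ∑ B ∈ T, B.card := by
    refine Finset.card_biUnion ?_
    intro B hB B' hB' hne
    show Disjoint B B'
    rw [Finset.disjoint_left]
    intro x hxB hxB'
    exact hne (((hblk x).2 B ⟨hTQ hB, hxB⟩).trans ((hblk x).2 B' ⟨hTQ hB', hxB'⟩).symm)
  have hfib : U.card = ∑ j ∈ Finset.range n, (U.filter (fun x => c l x.val = j)).card :=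
    Finset.card_eq_sum_card_fiberwise
      (fun x _ => Finset.mem_range.mpr (lt_of_le_of_lt (c_le x.val) x.isLt))
  set D : ℕ → Finset ℕ :=
    fun j => (Finset.range l.length).filter (fun i => j < l.getD i 0) with hD
  have hDdown : ∀ j, ∀ i ∈ D j, ∀ i', i' ≤ i → i' ∈ D j := by
    intro j i hi i' hi'
    rw [hD, Finset.mem_filter, Finset.mem_range] at hi ⊢
    obtain ⟨hilen, hji⟩ := hi
    have hi'len : i' < l.length := lt_of_le_of_lt hi' hilen
    refine ⟨hi'len, ?_⟩
    rcases eq_or_lt_of_le hi' with rfl | hlt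
    · exact hji
    · have := hsort.rel_get_of_lt (a := ⟨i', hi'len⟩) (b := ⟨i, hilen⟩) hlt
      rw [List.getD_eq_getElem l 0 hilen] at hji
      rw [List.getD_eq_getElem l 0 hi'len]
      have hgg : l[i] ≤ l[i'] := this
      omega
  have hcol : ∀ j, (U.filter (fun x => c l x.val = j)).card ≤
      (D j ∩ Finset.range k).card := by
    intro j
    set Fj := U.filter (fun x => c l x.val = j) with hFj
    have hmemFj : ∀ x ∈ Fj, x ∈ U ∧ c l x.val = j := by
      intro x hx; rw [hFj, Finset.mem_filter] at hx; exact hx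
    -- image under the row index
    have hrinj : Set.InjOn (fun x : Fin n => r l x.val) Fj := by
      intro x hx y hy hxy
      obtain ⟨-, hcx⟩ := hmemFj x hx
      obtain ⟨-, hcy⟩ := hmemFj y hy
      exact Fin.ext (rc_inj l hxy (hcx.trans hcy.symm))
    have hScard : (Fj.image (fun x : Fin n => r l x.val)).card = Fj.card :=
      Finset.card_image_of_injOn hrinj
    have hSsub : Fj.image (fun x : Fin n => r l x.val) ⊆ D j := by
      intro i hi
      obtain ⟨x, hx, rfl⟩ := Finset.mem_image.mp hi
      obtain ⟨-, hcx⟩ := hmemFj x hx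
      have hxlt : (x : ℕ) < l.sum := hsum ▸ x.isLt
      rw [hD, Finset.mem_filter, Finset.mem_range]
      refine ⟨r_lt_length l hxlt, ?_⟩
      have hclt := c_lt l hxlt
      rw [List.getD_eq_getElem l 0 (r_lt_length l hxlt)]
      rw [hcx] at hclt
      exact hclt
    -- bound by k via the block map
    have hFk : Fj.card ≤ k := by
      refine le_trans ?_ hTk
      refine Finset.card_le_card_of_injOn blk ?_ ?_
      · intro x hx
        obtain ⟨hxU, -⟩ := hmemFj x hx
        obtain ⟨B, hBT, hxB⟩ := Finset.mem_biUnion.mp hxU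
        rwa [(hblk x).2 B ⟨hTQ hBT, hxB⟩] at hBT
      · intro x hx y hy hxy
        obtain ⟨-, hcx⟩ := hmemFj x hx
        obtain ⟨-, hcy⟩ := hmemFj y hy
        exact hcinj (blk x) (hblk x).1.1 x (hblk x).1.2 y (hxy ▸ (hblk y).1.2)
          (hcx.trans hcy.symm)
    calc Fj.card = (Fj.image (fun x : Fin n => r l x.val)).card := hScard.symm
      _ ≤ (D j ∩ Finset.range k).card :=
          CLD2.card_le_inter_range hSsub (hDdown j) (hScard ▸ hFk)
  -- summing the column bounds
  have hsum2 : ∑ j ∈ Finset.range n, (D j ∩ Finset.range k).card = (l.take k).sum := by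
    have hinter : ∀ j, D j ∩ Finset.range k =
        (Finset.range (min l.length k)).filter (fun i => j < l.getD i 0) := by
      intro j
      ext i
      rw [hD, Finset.mem_inter, Finset.mem_filter, Finset.mem_filter,
        Finset.mem_range, Finset.mem_range, Finset.mem_range, lt_min_iff]
      tauto
    calc ∑ j ∈ Finset.range n, (D j ∩ Finset.range k).card
        = ∑ j ∈ Finset.range n, ∑ i ∈ Finset.range (min l.length k),
            if j < l.getD i 0 then 1 else 0 := by
          refine Finset.sum_congr rfl fun j _ => ?_
          rw [hinter j, Finset.card_filter]
      _ = ∑ i ∈ Finset.range (min l.length k), ∑ j ∈ Finset.range n,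
            if j < l.getD i 0 then 1 else 0 := Finset.sum_comm
      _ = ∑ i ∈ Finset.range (min l.length k), l.getD i 0 := by
          refine Finset.sum_congr rfl fun i hi => ?_
          rw [Finset.mem_range, lt_min_iff] at hi
          rw [← Finset.card_filter]
          have hle : l.getD i 0 ≤ n := by
            rw [List.getD_eq_getElem l 0 hi.1, ← hsum]
            exact List.single_le_sum (fun x _ => Nat.zero_le x) _ (l.getElem_mem hi.1)
          have : (Finset.range n).filter (fun j => j < l.getD i 0) =
              Finset.range (l.getD i 0) := by
            ext j
            rw [Finset.mem_filter, Finset.mem_range, Finset.mem_range]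
            omega
          rw [this, Finset.card_range]
      _ = ∑ i ∈ Finset.range k, l.getD i 0 := by
          refine Finset.sum_subset ?_ ?_
          · exact Finset.range_subset_range.mpr (min_le_right _ _)
          · intro i hik hinotin
            rw [Finset.mem_range] at hik
            rw [Finset.mem_range, lt_min_iff, not_and_or] at hinotin
            have hlen : l.length ≤ i := by omega
            exact List.getD_eq_default l 0 hlen
      _ = (l.take k).sum := CLD2.sum_getD l k
  calc ∑ B ∈ T, B.card = U.card := hUcard.symm
    _ = ∑ j ∈ Finset.range n, (U.filter (fun x => c l x.val = j)).card := hfib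
    _ ≤ ∑ j ∈ Finset.range n, (D j ∩ Finset.range k).card :=
        Finset.sum_le_sum fun j _ => hcol j
    _ = (l.take k).sum := hsum2

end CLD

/-- If `λ ≥_c μ` in the consumption ordering (every subgroup of `S_n` consuming `λ` also
consumes `μ`), then `λ ≥ μ` in the dominance ordering: for every `k`, the sum of the `k`
largest parts of `λ` is at least the sum of the `k` largest parts of `μ`. -/
theorem consumption_le_implies_dominance (n : ℕ) (hn : 0 < n) (lam mu : Nat.Partition n)
    (h : ∀ H : Subgroup (Equiv.Perm (Fin n)), Consumes n H lam → Consumes n H mu) :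
    ∀ k : ℕ, ((mu.parts.sort (· ≥ ·)).take k).sum ≤ ((lam.parts.sort (· ≥ ·)).take k).sum := by
  classical
  intro k
  set l := lam.parts.sort (· ≥ ·) with hl
  have hlcoe : (l : Multiset ℕ) = lam.parts := Multiset.sort_eq _ _
  have hsum : l.sum = n := by
    have h1 := lam.parts_sum
    rw [← hlcoe, Multiset.sum_coe] at h1
    exact h1
  have hpos : ∀ a ∈ l, 0 < a := fun a ha =>
    lam.parts_pos ((Multiset.mem_sort _).mp ha)
  have hsort : l.Pairwise (· ≥ ·) := Multiset.pairwise_sort _ _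
  obtain ⟨Q, hQ1, hQcards, hQd⟩ := h (CLD.H l n)
    ⟨CLD.P l hpos hsum, CLD.P_partition l hpos hsum,
      by rw [CLD.P_cards l hpos hsum, hlcoe], CLD.P_distinguishes l hpos hsum⟩
  set q := mu.parts.sort (· ≥ ·) with hq
  have hqle : ((q.take k : List ℕ) : Multiset ℕ) ≤ Q.val.map Finset.card := by
    rw [hQcards, ← Multiset.sort_eq mu.parts (· ≥ ·)]
    exact Multiset.coe_le.mpr (q.take_sublist k).subperm
  obtain ⟨v, hvle, hvmap⟩ := CLD2.pullback Finset.card _ _ hqle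
  have hvnodup : v.Nodup := Multiset.nodup_of_le hvle Q.nodup
  set T : Finset (Finset (Fin n)) := ⟨v, hvnodup⟩ with hT
  have hTQ : T ⊆ Q := Finset.val_le_iff.mp hvle
  have hTcard : T.card ≤ k := by
    have h2 : T.card = (q.take k).length := by
      show v.card = (q.take k).length
      rw [← Multiset.card_map Finset.card v, hvmap, Multiset.coe_card]
    rw [h2, List.length_take]
    exact min_le_left _ _
  have hsumT : ∑ B ∈ T, B.card = (q.take k).sum := by
    rw [← Finset.sum_map_val]
    show (v.map Finset.card).sum = _
    rw [hvmap, Multiset.sum_coe]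
  calc ((q.take k).sum) = ∑ B ∈ T, B.card := hsumT.symm
    _ ≤ (l.take k).sum := CLD.key hsort hsum Q hQ1 hQd T hTQ k hTcard
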